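/- The element d_{n,ε} := b_{n,+,ε} + b_{n,-,ε} ∈ TL(D_n)_ε is a non-zero idempotent satisfying s₀d_{n,ε}s₀ = d_{n,ε} and d_{n,ε}U_i = 0 = U_id_{n,ε} for all i = 0,1,…,n-1, where U₀ = s₀U₁s₀. -/

import Mathlib

/-! The element `d_{n,ε} = b_{n,+,ε} + b_{n,-,ε}` lies in `TL(D_n)_ε`, is a
non-zero idempotent, satisfies `s₀ d_{n,ε} s₀ = d_{n,ε}` and
`d_{n,ε} U_i = 0 = U_i d_{n,ε}` for all `i = 0,1,…,n-1`, where `U₀ = s₀U₁s₀`. -/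

noncomputable section
set_option synthInstance.maxHeartbeats 1000000
set_option maxHeartbeats 1000000

abbrev Kq : Type := RatFunc ℂ

def qq : Kq := RatFunc.X

/-- The quantum integer `[m] = (q^m - q^{-m})/(q - q⁻¹)` in `ℂ(q)`. -/
def qint (m : ℤ) : Kq := (qq ^ m - qq ^ (-m)) / (qq - qq⁻¹)

/-- Generators of the type `B` Temperley–Lieb algebra: `none` is `s₀`, and
`some i` is the cup-cap generator `U_{i+1}`. -/
def g : Option ℕ → FreeAlgebra Kq (Option ℕ) := FreeAlgebra.ι Kq

/-- The defining relations of the (specialized) type `B` Temperley–Lieb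
algebra (on infinitely many strands, so that `TL(B_n)` sits inside for
every `n`): `U_i² = -ε(q+q⁻¹)U_i`, distant commutativity,
`U_i U_{i±1} U_i = U_i`, `s₀² = 1`, `U₁ s₀ U₁ = 0` and `s₀ U_i = U_i s₀`
for `i ≥ 2`.  (Recall `some i` stands for `U_{i+1}`.) -/
inductive TLBRel (ε : Kq) : FreeAlgebra Kq (Option ℕ) → FreeAlgebra Kq (Option ℕ) → Prop
  | Usq (i : ℕ) :
      TLBRel ε (g (some i) * g (some i)) ((-(ε * (qq + qq⁻¹))) • g (some i))
  | Ucomm (i j : ℕ) (h : i + 2 ≤ j) :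
      TLBRel ε (g (some i) * g (some j)) (g (some j) * g (some i))
  | Ubraid1 (i : ℕ) :
      TLBRel ε (g (some i) * g (some (i+1)) * g (some i)) (g (some i))
  | Ubraid2 (i : ℕ) :
      TLBRel ε (g (some (i+1)) * g (some i) * g (some (i+1))) (g (some (i+1)))
  | s0sq : TLBRel ε (g none * g none) 1
  | UsU : TLBRel ε (g (some 0) * g none * g (some 0)) 0
  | scomm (i : ℕ) (h : 1 ≤ i) :
      TLBRel ε (g none * g (some i)) (g (some i) * g none)

/-- The (specialized) type `B` Temperley–Lieb algebra `TL(B)_ε` (on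
infinitely many strands). -/
abbrev TLB (ε : Kq) := RingQuot (TLBRel ε)

/-- The generator `s₀` of `TL(B)_ε`. -/
def s0 (ε : Kq) : TLB ε := RingQuot.mkAlgHom Kq (TLBRel ε) (g none)

/-- The generator `U_i` of `TL(B)_ε`, for `i ≥ 1`. -/
def UU (ε : Kq) (i : ℕ) : TLB ε := RingQuot.mkAlgHom Kq (TLBRel ε) (g (some (i - 1)))

/-- The subalgebra `TL(B_n)_ε ⊆ TL(B)_ε`, generated by `s₀, U₁, …, U_{n-1}`. -/
def TLBsub (ε : Kq) (n : ℕ) : Subalgebra Kq (TLB ε) :=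
  Algebra.adjoin Kq ({s0 ε} ∪ {x | ∃ i, 1 ≤ i ∧ i ≤ n - 1 ∧ x = UU ε i})

/-- The type `D` generators: `UD 0 = U₀ = s₀U₁s₀` and `UD i = U_i` for `i ≥ 1`. -/
def UD (ε : Kq) (i : ℕ) : TLB ε :=
  if i = 0 then s0 ε * UU ε 1 * s0 ε else UU ε i

/-- The subalgebra `TL(D_n)_ε ⊆ TL(B)_ε`, generated by `U₀, U₁, …, U_{n-1}`. -/
def TLDsub (ε : Kq) (n : ℕ) : Subalgebra Kq (TLB ε) :=
  Algebra.adjoin Kq {x | ∃ i ≤ n - 1, x = UD ε i}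

/-- The type `B_n` Jones–Wenzl projectors `b_{n,η,ε}` (for `η = ±1`), defined by
`b_{1,η,ε} = (1 + η s₀)/2` and the recursion
`b_{n+1,η,ε} = b_{n,η,ε} + ε (q^{n-1}+q^{-(n-1)})/(q^n+q^{-n}) · b_{n,η,ε} U_n b_{n,η,ε}`. -/
def bB (ε η : Kq) : ℕ → TLB ε
  | 0 => 1
  | 1 => (2 : Kq)⁻¹ • (1 + η • s0 ε)
  | (n+2) =>
      bB ε η (n+1) +
        (ε * (qq ^ n + qq⁻¹ ^ n) / (qq ^ (n+1) + qq⁻¹ ^ (n+1))) •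
          (bB ε η (n+1) * UU ε (n+1) * bB ε η (n+1))

/-- The type `D_n` Jones–Wenzl projector `d_{n,ε} = b_{n,+,ε} + b_{n,-,ε}`. -/
def dD (ε : Kq) (n : ℕ) : TLB ε := bB ε 1 n + bB ε (-1) n

-- scratch additions
def Vg (ε : Kq) (j : ℕ) : TLB ε := RingQuot.mkAlgHom Kq (TLBRel ε) (g (some j))
def dl (ε : Kq) : Kq := ε * (qq + qq⁻¹)
def cc (ε : Kq) (m : ℕ) : Kq := ε * (qq ^ (m-1) + qq⁻¹ ^ (m-1)) / (qq ^ m + qq⁻¹ ^ m)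
def tt (ε : Kq) : ℕ → Kq
  | 0 => 0
  | 1 => -(dl ε)/2
  | (m+2) => cc ε (m+1) - dl ε

lemma qq_ne : (qq : Kq) ≠ 0 := RatFunc.X_ne_zero

lemma pow_add_pow_ne (m : ℕ) : (qq : Kq) ^ m + qq⁻¹ ^ m ≠ 0 := by
  have key : (qq : Kq) ^ (2*m) + 1 ≠ 0 := by
    have h2 : ((qq : Kq) ^ (2*m) + 1) = algebraMap (Polynomial ℂ) Kq (Polynomial.X ^ (2*m) + 1) := by
      simp [qq, RatFunc.algebraMap_X]
    rw [h2]
    apply RatFunc.algebraMap_ne_zero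
    intro h
    have h1 := congrArg (Polynomial.eval 1) h
    simp at h1
  intro h0
  apply key
  have hpm : (qq:Kq)^m ≠ 0 := pow_ne_zero _ qq_ne
  have h : ((qq:Kq)^m + qq⁻¹^m) * qq^m = qq^(2*m) + 1 := by
    rw [inv_pow, add_mul, inv_mul_cancel₀ hpm, two_mul, pow_add]
  rw [← h, h0, zero_mul]

lemma np_ne (ε : Kq) (m : ℕ) (hε : ε = 1 ∨ ε = -1) :
    ε * (qq ^ m + qq⁻¹ ^ m) ≠ 0 := by
  rcases hε with h | h <;> subst h
  · simpa using pow_add_pow_ne m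
  · simp only [neg_one_mul, neg_ne_zero]
    exact pow_add_pow_ne m

lemma cc_ne (ε : Kq) (hε : ε = 1 ∨ ε = -1) (m : ℕ) : cc ε m ≠ 0 := by
  exact div_ne_zero (np_ne ε (m-1) hε) (pow_add_pow_ne m)

lemma Nrec (k : ℕ) : (qq:Kq)^(k+2) + qq⁻¹^(k+2) = (qq + qq⁻¹)*((qq:Kq)^(k+1) + qq⁻¹^(k+1)) - ((qq:Kq)^k + qq⁻¹^k) := by
  have h := qq_ne
  linear_combination (-((qq:Kq)^k + qq⁻¹^k)) * mul_inv_cancel₀ h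

lemma aux_cc (ε A B C D : Kq) (hε2 : ε * ε = 1) (hB : B ≠ 0) (hC : C ≠ 0)
    (key : C = D * B - A) : (ε * B / C) * (ε * A / B - ε * D) = -1 := by
  field_simp
  linear_combination (A - B*D)*hε2 + key

lemma cc_tt (ε : Kq) (hε : ε = 1 ∨ ε = -1) (m : ℕ) (hm : 1 ≤ m) :
    cc ε m * tt ε m = -1 := by
  have hε2 : ε * ε = 1 := by rcases hε with h | h <;> subst h <;> ring
  obtain ⟨k, rfl⟩ : ∃ k, m = k + 1 := ⟨m - 1, by omega⟩
  match k with
  | 0 =>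
    show cc ε 1 * (-(dl ε)/2) = -1
    rw [cc, dl]
    norm_num
    have hD : (qq:Kq) + qq⁻¹ ≠ 0 := by
      have := pow_add_pow_ne 1
      simpa [pow_one] using this
    set D := (qq:Kq) + qq⁻¹ with hDdef
    clear_value D
    have h2 : (2:Kq) ≠ 0 := by
      rw [show (2:Kq) = algebraMap (Polynomial ℂ) Kq 2 from (map_ofNat _ 2).symm]
      exact RatFunc.algebraMap_ne_zero (by norm_num)
    field_simp
    linear_combination (-1:Kq)*hε2
  | (k+1) =>
    have hB : (qq:Kq)^(k+1) + qq⁻¹^(k+1) ≠ 0 := pow_add_pow_ne (k+1)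
    have hC : (qq:Kq)^(k+2) + qq⁻¹^(k+2) ≠ 0 := pow_add_pow_ne (k+2)
    exact aux_cc ε _ _ _ _ hε2 hB hC (Nrec k)
lemma two_ne : (2:Kq) ≠ 0 := by
  rw [show (2:Kq) = algebraMap (Polynomial ℂ) Kq 2 from (map_ofNat _ 2).symm]
  exact RatFunc.algebraMap_ne_zero (by norm_num)

section Rels
variable (ε : Kq)

lemma Vsq (j : ℕ) : Vg ε j * Vg ε j = -(dl ε • Vg ε j) := by
  have h := RingQuot.mkAlgHom_rel Kq (TLBRel.Usq (ε := ε) j)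
  simpa [Vg, dl, map_mul, map_smul, neg_smul] using h

lemma Vcomm (i j : ℕ) (h : i + 2 ≤ j) : Vg ε i * Vg ε j = Vg ε j * Vg ε i := by
  have h2 := RingQuot.mkAlgHom_rel Kq (TLBRel.Ucomm (ε := ε) i j h)
  simpa [Vg, map_mul] using h2

lemma Vbraid1 (i : ℕ) : Vg ε i * Vg ε (i+1) * Vg ε i = Vg ε i := by
  have h := RingQuot.mkAlgHom_rel Kq (TLBRel.Ubraid1 (ε := ε) i)
  simpa [Vg, map_mul] using h

lemma Vbraid2 (i : ℕ) : Vg ε (i+1) * Vg ε i * Vg ε (i+1) = Vg ε (i+1) := by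
  have h := RingQuot.mkAlgHom_rel Kq (TLBRel.Ubraid2 (ε := ε) i)
  simpa [Vg, map_mul] using h

lemma Ssq : s0 ε * s0 ε = 1 := by
  have h := RingQuot.mkAlgHom_rel Kq (TLBRel.s0sq (ε := ε))
  simpa [s0, map_mul] using h

lemma VSV : Vg ε 0 * s0 ε * Vg ε 0 = 0 := by
  have h := RingQuot.mkAlgHom_rel Kq (TLBRel.UsU (ε := ε))
  simpa [Vg, s0, map_mul] using h

lemma Scomm (i : ℕ) (h : 1 ≤ i) : s0 ε * Vg ε i = Vg ε i * s0 ε := by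
  have h2 := RingQuot.mkAlgHom_rel Kq (TLBRel.scomm (ε := ε) i h)
  simpa [Vg, s0, map_mul] using h2

end Rels




lemma bB_one (ε η : Kq) : bB ε η 1 = (2:Kq)⁻¹ • (1 + η • s0 ε) := rfl

lemma bB_succ (ε η : Kq) (m : ℕ) (hm : 1 ≤ m) :
    bB ε η (m+1) = bB ε η m + cc ε m • (bB ε η m * Vg ε (m-1) * bB ε η m) := by
  obtain ⟨k, rfl⟩ : ∃ k, m = k + 1 := ⟨m - 1, by omega⟩
  rfl


section Abstract
variable {A : Type} [Ring A] [Algebra Kq A] (η c τ dl : Kq) (S B P V W X : A)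

lemma L_idem (hid : B * B = B) (hPB : P * B = B)
    (hτl : V * B * V = τ • (V * P)) (hct : c * τ = -1) :
    (B + c • (B * V * B)) * (B + c • (B * V * B)) = B + c • (B * V * B) := by
  have hid' : ∀ t, B * (B * t) = B * t := fun t => by rw [← mul_assoc, hid]
  have hτl' : ∀ t, V * (B * (V * t)) = τ • (V * (P * t)) := fun t => by
    rw [← mul_assoc V B (V * t), ← mul_assoc (V*B) V t, hτl, smul_mul_assoc, mul_assoc]
  simp only [mul_add, add_mul, smul_add, mul_smul_comm, smul_mul_assoc, smul_smul, mul_assoc]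
  rw [hid, hid' (V * B), hτl' B, hPB]
  simp only [mul_smul_comm, smul_smul]
  rw [← add_smul, show c + c * c * τ = 0 by linear_combination c*hct, zero_smul, add_zero]

lemma L_smulL (hsB : S * B = η • B) :
    S * (B + c • (B * V * B)) = η • (B + c • (B * V * B)) := by
  simp only [mul_add, add_mul, smul_add, mul_smul_comm, smul_mul_assoc, smul_smul, mul_assoc]
  rw [← mul_assoc (S) B, hsB]
  simp only [smul_mul_assoc, smul_smul, smul_add, mul_assoc]
  rw [mul_comm c η]

lemma L_smulR (hBs : B * S = η • B) :
    (B + c • (B * V * B)) * S = η • (B + c • (B * V * B)) := by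
  simp only [mul_add, add_mul, smul_add, mul_smul_comm, smul_mul_assoc, smul_smul, mul_assoc]
  rw [hBs]
  simp only [mul_smul_comm, smul_smul, smul_add, mul_assoc]
  rw [mul_comm c η]

lemma L_annL (hXB : X * B = 0) : X * (B + c • (B * V * B)) = 0 := by
  have hXB' : ∀ t, X * (B * t) = 0 := fun t => by rw [← mul_assoc, hXB, zero_mul]
  simp only [mul_add, add_mul, smul_add, mul_smul_comm, smul_mul_assoc, smul_smul, mul_assoc]
  rw [hXB, hXB' (V * B), smul_zero, add_zero]

lemma L_annR (hBX : B * X = 0) : (B + c • (B * V * B)) * X = 0 := by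
  simp only [mul_add, add_mul, smul_add, mul_smul_comm, smul_mul_assoc, smul_smul, mul_assoc]
  rw [hBX]
  simp only [mul_zero, smul_zero, add_zero, zero_add]

lemma L_annV_L (hPB : P * B = B) (hτl : V * B * V = τ • (V * P)) (hct : c * τ = -1) :
    V * (B + c • (B * V * B)) = 0 := by
  have hτl' : ∀ t, V * (B * (V * t)) = τ • (V * (P * t)) := fun t => by
    rw [← mul_assoc V B (V * t), ← mul_assoc (V*B) V t, hτl, smul_mul_assoc, mul_assoc]
  simp only [mul_add, add_mul, smul_add, mul_smul_comm, smul_mul_assoc, smul_smul, mul_assoc]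
  rw [hτl' B, hPB]
  simp only [mul_smul_comm, smul_smul]
  nth_rewrite 1 [← one_smul Kq (V * B)]
  rw [← add_smul, show (1:Kq) + c * τ = 0 by linear_combination hct, zero_smul]

lemma L_annV_R (hBP : B * P = B) (hτr : V * B * V = τ • (P * V)) (hct : c * τ = -1) :
    (B + c • (B * V * B)) * V = 0 := by
  have hτr' : ∀ t, V * (B * (V * t)) = τ • (P * (V * t)) := fun t => by
    rw [← mul_assoc V B (V * t), ← mul_assoc (V*B) V t, hτr, smul_mul_assoc, mul_assoc]
  have hBP' : ∀ t, B * (P * t) = B * t := fun t => by rw [← mul_assoc, hBP]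
  simp only [mul_add, add_mul, smul_add, mul_smul_comm, smul_mul_assoc, smul_smul, mul_assoc]
  rw [← mul_assoc V B V, hτr]
  simp only [mul_smul_comm, smul_smul]
  rw [hBP' V]
  nth_rewrite 1 [← one_smul Kq (B * V)]
  rw [← add_smul, show (1:Kq) + c * τ = 0 by linear_combination hct, zero_smul]

lemma L_comm (hXB : X * B = B * X) (hXV : X * V = V * X) :
    X * (B + c • (B * V * B)) = (B + c • (B * V * B)) * X := by
  have hXB' : ∀ t, X * (B * t) = B * (X * t) := fun t => by rw [← mul_assoc, hXB, mul_assoc]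
  have hXV' : ∀ t, X * (V * t) = V * (X * t) := fun t => by rw [← mul_assoc, hXV, mul_assoc]
  simp only [mul_add, add_mul, smul_add, mul_smul_comm, smul_mul_assoc, smul_smul, mul_assoc]
  rw [hXB' (V * B), hXV' B, hXB]

lemma L_tau (hid : B * B = B) (hcomW : W * B = B * W) (hbr : W * V * W = W)
    (hWsq : W * W = -(dl • W)) :
    W * (B + c • (B * V * B)) * W = (c - dl) • (B * W) := by
  have hcomW' : ∀ t, W * (B * t) = B * (W * t) := fun t => by rw [← mul_assoc, hcomW, mul_assoc]
  have hbr' : ∀ t, W * (V * (W * t)) = W * t := fun t => by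
    rw [← mul_assoc W V (W*t), ← mul_assoc (W*V) W t, hbr]
  have hid' : ∀ t, B * (B * t) = B * t := fun t => by rw [← mul_assoc, hid]
  have key : W * (B * (V * (B * W))) = B * W := by
    calc W * (B * (V * (B * W))) = B * (W * (V * (B * W))) := hcomW' _
      _ = B * (W * (V * (W * B))) := by rw [← hcomW]
      _ = B * (W * B) := by rw [hbr' B]
      _ = B * (B * W) := by rw [hcomW]
      _ = B * W := hid' W
  simp only [mul_add, add_mul, smul_add, mul_smul_comm, smul_mul_assoc, smul_smul, mul_assoc]
  rw [key, hcomW' W, hWsq]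
  simp only [mul_neg, mul_smul_comm, sub_smul]
  abel

lemma L_PB (hid : B * B = B) : B * (B + c • (B * V * B)) = B + c • (B * V * B) := by
  have hid' : ∀ t, B * (B * t) = B * t := fun t => by rw [← mul_assoc, hid]
  simp only [mul_add, add_mul, smul_add, mul_smul_comm, smul_mul_assoc, smul_smul, mul_assoc]
  rw [hid, hid' (V * B)]

lemma L_BP (hid : B * B = B) : (B + c • (B * V * B)) * B = B + c • (B * V * B) := by
  simp only [mul_add, add_mul, smul_add, mul_smul_comm, smul_mul_assoc, smul_smul, mul_assoc]
  rw [hid]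

end Abstract

theorem master (ε η : Kq) (hε : ε = 1 ∨ ε = -1) (hη : η = 1 ∨ η = -1) :
    ∀ m : ℕ, 1 ≤ m →
    (bB ε η m * bB ε η m = bB ε η m) ∧
    (s0 ε * bB ε η m = η • bB ε η m) ∧
    (bB ε η m * s0 ε = η • bB ε η m) ∧
    (∀ j, j + 2 ≤ m → Vg ε j * bB ε η m = 0 ∧ bB ε η m * Vg ε j = 0) ∧
    (∀ k, m ≤ k → Vg ε k * bB ε η m = bB ε η m * Vg ε k) ∧
    (Vg ε (m-1) * bB ε η m * Vg ε (m-1) = tt ε m • (Vg ε (m-1) * bB ε η (m-1))) ∧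
    (Vg ε (m-1) * bB ε η m * Vg ε (m-1) = tt ε m • (bB ε η (m-1) * Vg ε (m-1))) ∧
    (bB ε η (m-1) * bB ε η m = bB ε η m) ∧
    (bB ε η m * bB ε η (m-1) = bB ε η m) := by
  have hη2 : η * η = 1 := by rcases hη with h | h <;> subst h <;> ring
  refine Nat.le_induction ?_ ?_
  · -- base case m = 1
    have inner : (1 + η • s0 ε) * (1 + η • s0 ε) = (2:Kq) • (1 + η • s0 ε) := by
      simp only [mul_add, add_mul, one_mul, mul_one, mul_smul_comm, smul_mul_assoc, smul_smul]
      rw [smul_add η (s0 ε), smul_smul, hη2, one_smul,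
        show (2:Kq) = 1 + 1 by norm_num, add_smul, one_smul, Ssq]
      abel
    have hsb1 : s0 ε * bB ε η 1 = η • bB ε η 1 := by
      rw [bB_one, mul_smul_comm, mul_add, mul_one, mul_smul_comm, Ssq]
      rw [smul_comm η ((2:Kq)⁻¹), smul_add η, smul_smul η η, hη2, one_smul]
      rw [add_comm (s0 ε) (η • (1:TLB ε))]
    have hb1s : bB ε η 1 * s0 ε = η • bB ε η 1 := by
      rw [bB_one, smul_mul_assoc, add_mul, one_mul, smul_mul_assoc, Ssq]
      rw [smul_comm η ((2:Kq)⁻¹), smul_add η, smul_smul η η, hη2, one_smul]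
      rw [add_comm (s0 ε) (η • (1:TLB ε))]
    refine ⟨?_, hsb1, hb1s, ?_, ?_, ?_, ?_, ?_, ?_⟩
    · show bB ε η 1 * bB ε η 1 = bB ε η 1
      rw [bB_one, smul_mul_assoc, mul_smul_comm, smul_smul, inner, smul_smul,
        mul_assoc, inv_mul_cancel₀ two_ne, mul_one, ← bB_one]
    · intro j hj; omega
    · intro k hk
      rw [bB_one]
      simp only [mul_smul_comm, smul_mul_assoc, mul_add, add_mul, mul_one, one_mul]
      rw [Scomm ε k hk]
    · show Vg ε 0 * bB ε η 1 * Vg ε 0 = tt ε 1 • (Vg ε 0 * bB ε η 0)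
      rw [bB_one, show bB ε η 0 = 1 from rfl, mul_one]
      simp only [mul_smul_comm, smul_mul_assoc, mul_add, add_mul, mul_one, one_mul]
      rw [VSV, smul_zero, add_zero, Vsq, smul_neg, smul_smul, ← neg_smul]
      show (-((2:Kq)⁻¹ * dl ε)) • Vg ε 0 = (-(dl ε)/2) • Vg ε 0
      congr 1
      ring
    · show Vg ε 0 * bB ε η 1 * Vg ε 0 = tt ε 1 • (bB ε η 0 * Vg ε 0)
      rw [bB_one, show bB ε η 0 = 1 from rfl, one_mul]
      simp only [mul_smul_comm, smul_mul_assoc, mul_add, add_mul, mul_one, one_mul]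
      rw [VSV, smul_zero, add_zero, Vsq, smul_neg, smul_smul, ← neg_smul]
      show (-((2:Kq)⁻¹ * dl ε)) • Vg ε 0 = (-(dl ε)/2) • Vg ε 0
      congr 1
      ring
    · show bB ε η 0 * bB ε η 1 = bB ε η 1
      rw [show bB ε η 0 = 1 from rfl, one_mul]
    · show bB ε η 1 * bB ε η 0 = bB ε η 1
      rw [show bB ε η 0 = 1 from rfl, mul_one]
  · intro m hm IH
    obtain ⟨hid, hsB, hBs, hann, hcom, hτl, hτr, hPB, hBP⟩ := IH
    have hct := cc_tt ε hε m hm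
    have hsucc := bB_succ ε η m hm
    have httsucc : tt ε (m+1) = cc ε m - dl ε := by
      obtain ⟨k, rfl⟩ : ∃ k, m = k + 1 := ⟨m - 1, by omega⟩
      rfl
    have hbr : Vg ε m * Vg ε (m-1) * Vg ε m = Vg ε m := by
      have h := Vbraid2 ε (m-1)
      rwa [show m - 1 + 1 = m by omega] at h
    have hcomW : Vg ε m * bB ε η m = bB ε η m * Vg ε m := hcom m le_rfl
    refine ⟨?_, ?_, ?_, ?_, ?_, ?_, ?_, ?_, ?_⟩
    · show bB ε η (m+1) * bB ε η (m+1) = bB ε η (m+1)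
      rw [hsucc]
      exact L_idem _ _ _ _ _ hid hPB hτl hct
    · show s0 ε * bB ε η (m+1) = η • bB ε η (m+1)
      rw [hsucc]
      exact L_smulL _ _ _ _ _ hsB
    · show bB ε η (m+1) * s0 ε = η • bB ε η (m+1)
      rw [hsucc]
      exact L_smulR _ _ _ _ _ hBs
    · intro j hj
      rcases (by omega : j + 2 ≤ m ∨ j = m - 1) with hle | heq
      · obtain ⟨h1, h2⟩ := hann j hle
        exact ⟨by rw [hsucc]; exact L_annL _ _ _ _ h1,
               by rw [hsucc]; exact L_annR _ _ _ _ h2⟩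
      · subst heq
        exact ⟨by rw [hsucc]; exact L_annV_L _ _ _ _ _ hPB hτl hct,
               by rw [hsucc]; exact L_annV_R _ _ _ _ _ hBP hτr hct⟩
    · intro k hk
      rw [hsucc]
      exact L_comm _ _ _ _ (hcom k (by omega)) (Vcomm ε (m-1) k (by omega)).symm
    · show Vg ε m * bB ε η (m+1) * Vg ε m = tt ε (m+1) • (Vg ε m * bB ε η m)
      rw [hsucc, httsucc, hcomW]
      exact L_tau _ _ _ _ _ hid hcomW hbr (Vsq ε m)
    · show Vg ε m * bB ε η (m+1) * Vg ε m = tt ε (m+1) • (bB ε η m * Vg ε m)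
      rw [hsucc, httsucc]
      exact L_tau _ _ _ _ _ hid hcomW hbr (Vsq ε m)
    · show bB ε η m * bB ε η (m+1) = bB ε η (m+1)
      rw [hsucc]
      exact L_PB _ _ _ hid
    · show bB ε η (m+1) * bB ε η m = bB ε η (m+1)
      rw [hsucc]
      exact L_BP _ _ _ hid
lemma eq_neg_self_zero {A : Type} [AddCommGroup A] [Module Kq A] {x : A}
    (h : x = (-1 : Kq) • x) : x = 0 := by
  have h3 : (2:Kq) • x = 0 := by
    rw [two_smul]
    nth_rewrite 1 [h]
    nth_rewrite 2 [← one_smul Kq x]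
    rw [← add_smul, show (-1:Kq) + 1 = 0 by ring, zero_smul]
  rcases smul_eq_zero.mp h3 with h4 | h4
  · exact absurd h4 two_ne
  · exact h4

section CrossSec
variable (ε : Kq)

lemma bP_s0 (hε : ε = 1 ∨ ε = -1) (n : ℕ) (hn : 1 ≤ n) : bB ε 1 n * s0 ε = bB ε 1 n := by
  have h := (master ε 1 hε (Or.inl rfl) n hn).2.2.1
  rwa [one_smul] at h

lemma s0_bP (hε : ε = 1 ∨ ε = -1) (n : ℕ) (hn : 1 ≤ n) : s0 ε * bB ε 1 n = bB ε 1 n := by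
  have h := (master ε 1 hε (Or.inl rfl) n hn).2.1
  rwa [one_smul] at h

lemma bM_s0 (hε : ε = 1 ∨ ε = -1) (n : ℕ) (hn : 1 ≤ n) :
    bB ε (-1) n * s0 ε = (-1 : Kq) • bB ε (-1) n :=
  (master ε (-1) hε (Or.inr rfl) n hn).2.2.1

lemma s0_bM (hε : ε = 1 ∨ ε = -1) (n : ℕ) (hn : 1 ≤ n) :
    s0 ε * bB ε (-1) n = (-1 : Kq) • bB ε (-1) n :=
  (master ε (-1) hε (Or.inr rfl) n hn).2.1

lemma cross1 (hε : ε = 1 ∨ ε = -1) (n : ℕ) (hn : 1 ≤ n) : bB ε 1 n * bB ε (-1) n = 0 := by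
  apply eq_neg_self_zero (x := bB ε 1 n * bB ε (-1) n)
  calc bB ε 1 n * bB ε (-1) n = (bB ε 1 n * s0 ε) * bB ε (-1) n := by rw [bP_s0 ε hε n hn]
    _ = bB ε 1 n * (s0 ε * bB ε (-1) n) := by rw [mul_assoc]
    _ = (-1 : Kq) • (bB ε 1 n * bB ε (-1) n) := by rw [s0_bM ε hε n hn, mul_smul_comm]

lemma cross2 (hε : ε = 1 ∨ ε = -1) (n : ℕ) (hn : 1 ≤ n) : bB ε (-1) n * bB ε 1 n = 0 := by
  apply eq_neg_self_zero (x := bB ε (-1) n * bB ε 1 n)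
  calc bB ε (-1) n * bB ε 1 n = bB ε (-1) n * (s0 ε * bB ε 1 n) := by rw [s0_bP ε hε n hn]
    _ = (bB ε (-1) n * s0 ε) * bB ε 1 n := by rw [mul_assoc]
    _ = (-1 : Kq) • (bB ε (-1) n * bB ε 1 n) := by rw [bM_s0 ε hε n hn, smul_mul_assoc]

lemma crossV1 (hε : ε = 1 ∨ ε = -1) (n : ℕ) (hn : 1 ≤ n) (j : ℕ) (hj : 1 ≤ j) :
    bB ε 1 n * Vg ε j * bB ε (-1) n = 0 := by
  apply eq_neg_self_zero (x := bB ε 1 n * Vg ε j * bB ε (-1) n)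
  conv_lhs => rw [← bP_s0 ε hε n hn]
  rw [mul_assoc (bB ε 1 n) (s0 ε) (Vg ε j), Scomm ε j hj,
    ← mul_assoc (bB ε 1 n) (Vg ε j) (s0 ε),
    mul_assoc (bB ε 1 n * Vg ε j) (s0 ε) (bB ε (-1) n),
    s0_bM ε hε n hn, mul_smul_comm]

lemma crossV2 (hε : ε = 1 ∨ ε = -1) (n : ℕ) (hn : 1 ≤ n) (j : ℕ) (hj : 1 ≤ j) :
    bB ε (-1) n * Vg ε j * bB ε 1 n = 0 := by
  apply eq_neg_self_zero (x := bB ε (-1) n * Vg ε j * bB ε 1 n)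
  conv_lhs => rw [← s0_bP ε hε n hn]
  rw [← mul_assoc (bB ε (-1) n * Vg ε j) (s0 ε) (bB ε 1 n),
    mul_assoc (bB ε (-1) n) (Vg ε j) (s0 ε), ← Scomm ε j hj,
    ← mul_assoc (bB ε (-1) n) (s0 ε) (Vg ε j),
    bM_s0 ε hε n hn, smul_mul_assoc, smul_mul_assoc]

end CrossSec

section DD
variable (ε : Kq)

lemma e_plus : bB ε 1 1 * Vg ε 0 * bB ε 1 1 =
    ((2:Kq)⁻¹ * (2:Kq)⁻¹) • (Vg ε 0 + s0 ε * Vg ε 0 + Vg ε 0 * s0 ε + s0 ε * Vg ε 0 * s0 ε) := by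
  rw [bB_one]
  simp only [smul_mul_assoc, mul_smul_comm, smul_smul, mul_add, add_mul, one_mul, mul_one,
    smul_add, one_smul, mul_assoc]
  abel

lemma e_minus : bB ε (-1) 1 * Vg ε 0 * bB ε (-1) 1 =
    ((2:Kq)⁻¹ * (2:Kq)⁻¹) • (Vg ε 0 - s0 ε * Vg ε 0 - Vg ε 0 * s0 ε + s0 ε * Vg ε 0 * s0 ε) := by
  rw [bB_one]
  simp only [smul_mul_assoc, mul_smul_comm, smul_smul, mul_add, add_mul, one_mul, mul_one,
    smul_add, neg_one_smul, mul_assoc]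
  rw [show ((2:Kq)⁻¹*((2:Kq)⁻¹*(-1))) = -((2:Kq)⁻¹*(2:Kq)⁻¹) by ring,
      show ((2:Kq)⁻¹*((-1:Kq)*(2:Kq)⁻¹)) = -((2:Kq)⁻¹*(2:Kq)⁻¹) by ring,
      show ((2:Kq)⁻¹*((-1:Kq)*((2:Kq)⁻¹*(-1)))) = (2:Kq)⁻¹*(2:Kq)⁻¹ by ring]
  simp only [neg_smul, smul_sub]
  abel

lemma e_zero : bB ε 1 1 + bB ε (-1) 1 = 1 := by
  rw [bB_one, bB_one, ← smul_add]
  have h : (1 + (1:Kq) • s0 ε) + (1 + (-1:Kq) • s0 ε) = (2:Kq) • (1:TLB ε) := by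
    have h0 : (1:Kq) • s0 ε + (-1:Kq) • s0 ε = 0 := by
      rw [← add_smul, show (1:Kq) + -1 = 0 by ring, zero_smul]
    rw [add_add_add_comm, h0, add_zero, two_smul]
  rw [h, smul_smul, inv_mul_cancel₀ two_ne, one_smul]

lemma dD_two : dD ε 2 = 1 + (cc ε 1 * ((2:Kq)⁻¹ * (2:Kq)⁻¹)) •
    ((Vg ε 0 + s0 ε * Vg ε 0 * s0 ε) + (Vg ε 0 + s0 ε * Vg ε 0 * s0 ε)) := by
  have h1 : dD ε 2 = (bB ε 1 1 + bB ε (-1) 1) +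
      cc ε 1 • (bB ε 1 1 * Vg ε 0 * bB ε 1 1 + bB ε (-1) 1 * Vg ε 0 * bB ε (-1) 1) := by
    rw [dD, bB_succ ε 1 1 le_rfl, bB_succ ε (-1) 1 le_rfl, smul_add]
    abel
  rw [h1, e_zero, e_plus, e_minus, ← smul_add, smul_smul]
  congr 1
  abel

lemma dD_succ (hε : ε = 1 ∨ ε = -1) (m : ℕ) (hm : 2 ≤ m) :
    dD ε (m+1) = dD ε m + cc ε m • (dD ε m * Vg ε (m-1) * dD ε m) := by
  have hm1 : 1 ≤ m := by omega
  have hc1 := crossV1 ε hε m hm1 (m-1) (by omega)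
  have hc2 := crossV2 ε hε m hm1 (m-1) (by omega)
  rw [dD, dD, bB_succ ε 1 m hm1, bB_succ ε (-1) m hm1]
  simp only [dD, mul_add, add_mul, smul_add]
  rw [hc1, hc2]
  simp only [smul_zero, add_zero, zero_add]
  abel

end DD

lemma UD_mem (ε : Kq) (n i : ℕ) (hi : i ≤ n - 1) : UD ε i ∈ TLDsub ε n :=
  Algebra.subset_adjoin ⟨i, hi, rfl⟩

lemma TLD_mono (ε : Kq) (n : ℕ) : TLDsub ε n ≤ TLDsub ε (n+1) :=
  Algebra.adjoin_mono (by rintro x ⟨i, hi, hx⟩; exact ⟨i, by omega, hx⟩)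

lemma UD_one_eq (ε : Kq) : UD ε 1 = Vg ε 0 := rfl

lemma UD_zero_eq (ε : Kq) : UD ε 0 = s0 ε * Vg ε 0 * s0 ε := rfl

lemma UD_big (ε : Kq) (i : ℕ) (hi : 1 ≤ i) : UD ε i = Vg ε (i-1) := by
  have h0 : ¬ i = 0 := by omega
  simp only [UD, if_neg h0]
  rfl

lemma dD_mem (ε : Kq) (hε : ε = 1 ∨ ε = -1) : ∀ n, 2 ≤ n → dD ε n ∈ TLDsub ε n := by
  refine Nat.le_induction ?_ ?_
  · rw [dD_two ε]
    have h0 : s0 ε * Vg ε 0 * s0 ε ∈ TLDsub ε 2 := by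
      have h := UD_mem ε 2 0 (by omega)
      rwa [UD_zero_eq] at h
    have h1 : Vg ε 0 ∈ TLDsub ε 2 := by
      have h := UD_mem ε 2 1 (by omega)
      rwa [UD_one_eq] at h
    exact add_mem (one_mem _)
      (Subalgebra.smul_mem _ (add_mem (add_mem h1 h0) (add_mem h1 h0)) _)
  · intro m hm IH
    rw [dD_succ ε hε m hm]
    have hUD : Vg ε (m-1) ∈ TLDsub ε (m+1) := by
      have h := UD_mem ε (m+1) m (by omega)
      rwa [UD_big ε m (by omega)] at h
    have hD : dD ε m ∈ TLDsub ε (m+1) := TLD_mono ε m IH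
    exact add_mem hD (Subalgebra.smul_mem _ (mul_mem (mul_mem hD hUD) hD) _)

def phiF : FreeAlgebra Kq (Option ℕ) →ₐ[Kq] Kq :=
  FreeAlgebra.lift Kq (fun o => match o with | none => (1:Kq) | some _ => 0)

lemma phiF_rel (ε : Kq) : ∀ ⦃x y⦄, TLBRel ε x y → phiF x = phiF y := by
  intro x y h
  induction h <;> simp [phiF, g, smul_eq_mul]

def phi (ε : Kq) : TLB ε →ₐ[Kq] Kq := RingQuot.liftAlgHom Kq ⟨phiF, phiF_rel ε⟩

lemma phi_s0 (ε : Kq) : phi ε (s0 ε) = 1 := by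
  rw [s0, phi, RingQuot.liftAlgHom_mkAlgHom_apply]
  simp [phiF, g]

lemma phi_Vg (ε : Kq) (j : ℕ) : phi ε (Vg ε j) = 0 := by
  rw [Vg, phi, RingQuot.liftAlgHom_mkAlgHom_apply]
  simp [phiF, g]

lemma phi_bB (ε η : Kq) : ∀ n, 1 ≤ n → phi ε (bB ε η n) = (2:Kq)⁻¹ * (1 + η) := by
  refine Nat.le_induction ?_ ?_
  · rw [bB_one, map_smul, map_add, map_one, map_smul, phi_s0, smul_eq_mul, smul_eq_mul, mul_one]
  · intro m hm IH
    rw [bB_succ ε η m hm, map_add, map_smul, map_mul, map_mul, phi_Vg,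
      mul_zero, zero_mul, smul_zero, add_zero, IH]

lemma dD_ne_zero (ε : Kq) (n : ℕ) (hn : 2 ≤ n) : dD ε n ≠ 0 := by
  intro h
  have h1 : phi ε (dD ε n) = 1 := by
    rw [dD, map_add, phi_bB ε 1 n (by omega), phi_bB ε (-1) n (by omega),
      show (1:Kq)+1 = 2 by norm_num, show (1:Kq) + -1 = 0 by ring, mul_zero, add_zero,
      inv_mul_cancel₀ two_ne]
  rw [h, map_zero] at h1
  exact zero_ne_one h1


theorem stmt14 (ε : Kq) (hε : ε = 1 ∨ ε = -1) (n : ℕ) (hn : 2 ≤ n) :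
    dD ε n ∈ TLDsub ε n ∧ dD ε n ≠ 0 ∧ IsIdempotentElem (dD ε n) ∧
    s0 ε * dD ε n * s0 ε = dD ε n ∧
    ∀ i : ℕ, i ≤ n - 1 → dD ε n * UD ε i = 0 ∧ UD ε i * dD ε n = 0 := by
  have hn1 : 1 ≤ n := by omega
  obtain ⟨hidP, hsP, hPs, hannP, -, -, -, -, -⟩ := master ε 1 hε (Or.inl rfl) n hn1
  obtain ⟨hidM, hsM, hMs, hannM, -, -, -, -, -⟩ := master ε (-1) hε (Or.inr rfl) n hn1
  refine ⟨dD_mem ε hε n hn, dD_ne_zero ε n hn, ?_, ?_, ?_⟩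
  · show dD ε n * dD ε n = dD ε n
    rw [dD]
    simp only [mul_add, add_mul]
    rw [hidP, hidM, cross1 ε hε n hn1, cross2 ε hε n hn1]
    simp only [add_zero, zero_add]
  · rw [dD, mul_add, add_mul, hsP, hsM, one_smul, smul_mul_assoc,
      bP_s0 ε hε n hn1, bM_s0 ε hε n hn1, smul_smul,
      show ((-1:Kq)) * (-1) = 1 by norm_num, one_smul]
  · intro i hi
    rcases Nat.eq_zero_or_pos i with rfl | hipos
    · constructor
      · have hdv : dD ε n * s0 ε * Vg ε 0 = 0 := by
          rw [dD, add_mul, bP_s0 ε hε n hn1, bM_s0 ε hε n hn1, add_mul, smul_mul_assoc,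
            (hannP 0 (by omega)).2, (hannM 0 (by omega)).2, smul_zero, add_zero]
        calc dD ε n * UD ε 0 = (dD ε n * s0 ε * Vg ε 0) * s0 ε := by
              rw [UD_zero_eq, ← mul_assoc, ← mul_assoc]
          _ = 0 := by rw [hdv, zero_mul]
      · have hvd : Vg ε 0 * (s0 ε * dD ε n) = 0 := by
          rw [dD, mul_add, hsP, hsM, one_smul, mul_add, mul_smul_comm,
            (hannP 0 (by omega)).1, (hannM 0 (by omega)).1, smul_zero, add_zero]
        calc UD ε 0 * dD ε n = s0 ε * (Vg ε 0 * (s0 ε * dD ε n)) := by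
              rw [UD_zero_eq, mul_assoc, mul_assoc]
          _ = 0 := by rw [hvd, mul_zero]
    · have hUDi : UD ε i = Vg ε (i-1) := UD_big ε i hipos
      have h2 : i - 1 + 2 ≤ n := by omega
      constructor
      · rw [hUDi, dD, add_mul, (hannP (i-1) h2).2, (hannM (i-1) h2).2, add_zero]
      · rw [hUDi, dD, mul_add, (hannP (i-1) h2).1, (hannM (i-1) h2).1, add_zero]

end
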